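/- Let 𝔐 = (M, ⊕, ⪯, 0) be a distance monoid with only finitely many blocks and let S be a finite subset of M. Then for every nonzero block B of 𝔐 there exists an element mus(B, S) ∈ B such that for every ℓ ∈ S and every e ∈ S^⊕, one of the following holds: (1) ℓ ⪯ e ⊕ mus(B, S), or (2) e ⊕ b ≺ ℓ for every b ∈ B. -/

import Mathlib

/-- The block relation `a ~ b`: there are positive integers `m, n` with `b ⪯ m × a`
and `a ⪯ n × b`. -/
def blockRel {M : Type*} [AddCommMonoid M] [LinearOrder M] (a b : M) : Prop :=
  (∃ m : ℕ, 0 < m ∧ b ≤ m • a) ∧ (∃ n : ℕ, 0 < n ∧ a ≤ n • b)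

/-- Let `𝔐` be a distance monoid with finitely many blocks and `S ⊆ M` finite.
Then every nonzero block `B` (the block of a nonzero `b₀`) contains an element
`mus(B, S)` such that for all `ℓ ∈ S` and all `e ∈ S^⊕` (nonempty finite sums of
elements of `S`), either `ℓ ⪯ e ⊕ mus(B, S)` or `e ⊕ b ≺ ℓ` for every `b ∈ B`. -/
theorem exists_mus {M : Type*} [AddCommMonoid M] [LinearOrder M]
    (hzero : ∀ a : M, 0 ≤ a)
    (hmono : ∀ a b c d : M, a ≤ c → b ≤ d → a + b ≤ c + d)
    (hfinblocks :
      {B : Set M | ∃ a : M, a ≠ 0 ∧ B = {x : M | x ≠ 0 ∧ blockRel a x}}.Finite)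
    (S : Finset M) :
    ∀ b₀ : M, b₀ ≠ 0 →
      ∃ mus : M, mus ≠ 0 ∧ blockRel b₀ mus ∧
        ∀ ℓ ∈ S, ∀ e : M,
          (∃ l : List M, l ≠ [] ∧ (∀ x ∈ l, x ∈ S) ∧ l.sum = e) →
          (ℓ ≤ e + mus ∨ ∀ b : M, b ≠ 0 → blockRel b₀ b → e + b < ℓ) := by
  classical
  intro b₀ hb₀
  -- membership in the block of b₀
  set InB : M → Prop := fun x => x ≠ 0 ∧ blockRel b₀ x with hInB
  have hb₀B : InB b₀ := ⟨hb₀, ⟨1, one_pos, by simp⟩, ⟨1, one_pos, by simp⟩⟩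
  have hselfle : ∀ a f : M, a ≤ a + f := by
    intro a f
    calc a = a + 0 := by rw [add_zero]
    _ ≤ a + f := hmono _ _ _ _ le_rfl (hzero f)
  -- key lemma: for each ℓ a suitable μ in the block exists
  have key : ∀ ℓ : M, ∃ μ, InB μ ∧ ∀ e : M,
      (∃ m : Multiset M, (∀ x ∈ m, x ∈ S) ∧ m.sum = e) →
      (∃ b, InB b ∧ ℓ ≤ e + b) → ℓ ≤ e + μ := by
    intro ℓ
    by_contra hcon
    push_neg at hcon
    have h2 : ∀ μ : M, ∃ e b : M, InB μ →
        ((∃ m : Multiset M, (∀ x ∈ m, x ∈ S) ∧ m.sum = e) ∧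
          InB b ∧ ℓ ≤ e + b ∧ e + μ < ℓ) := by
      intro μ
      by_cases h : InB μ
      · obtain ⟨e, hm, ⟨b, hbB, hlb⟩, hlt⟩ := hcon μ h
        exact ⟨e, b, fun _ => ⟨hm, hbB, hlb, hlt⟩⟩
      · exact ⟨0, 0, fun h' => absurd h' h⟩
    choose E Bf hEB using h2
    -- build the increasing sequence of μ's
    obtain ⟨μs, h0, hs⟩ : ∃ f : ℕ → M, f 0 = b₀ ∧ ∀ n, f (n + 1) = max (Bf (f n)) (f n) :=
      ⟨fun n => Nat.rec b₀ (fun _ μ => max (Bf μ) μ) n, rfl, fun _ => rfl⟩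
    have hμB : ∀ n, InB (μs n) := by
      intro n
      induction n with
      | zero => rw [h0]; exact hb₀B
      | succ n ih =>
        rw [hs n]
        rcases max_choice (Bf (μs n)) (μs n) with h | h <;> rw [h]
        · exact (hEB (μs n) ih).2.1
        · exact ih
    have hμmono : Monotone μs :=
      monotone_nat_of_le_succ fun n => by rw [hs n]; exact le_max_right _ _
    have hsum : ∀ n, ∃ m : Multiset M, (∀ x ∈ m, x ∈ S) ∧ m.sum = E (μs n) :=
      fun n => (hEB (μs n) (hμB n)).1
    choose ms hmsS hmsum using hsum
    -- Dickson's lemma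
    have hpwo : Set.IsPWO (Set.univ : Set (↥S → ℕ)) :=
      Set.isPWO_of_wellQuasiOrderedLE _
    obtain ⟨i, j, hij, hcle⟩ :=
      hpwo (fun n => ⟨fun (s : ↥S) => (ms n).count ↑s, Set.mem_univ _⟩)
    have hml : ms i ≤ ms j := by
      rw [Multiset.le_iff_count]
      intro a
      by_cases ha : a ∈ S
      · exact hcle ⟨a, ha⟩
      · have : a ∉ ms i := fun h => ha (hmsS i a h)
        simp [Multiset.count_eq_zero_of_notMem this]
    have hEij : E (μs i) ≤ E (μs j) := by
      have hadd : ms i + (ms j - ms i) = ms j := add_tsub_cancel_of_le hml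
      have : E (μs j) = E (μs i) + (ms j - ms i).sum := by
        rw [← hmsum i, ← hmsum j, ← Multiset.sum_add, hadd]
      rw [this]
      exact hselfle _ _
    have h1 : ℓ ≤ E (μs i) + μs (i + 1) := by
      rw [hs i]
      exact le_trans (hEB (μs i) (hμB i)).2.2.1 (hmono _ _ _ _ le_rfl (le_max_left _ _))
    have h3 : ℓ ≤ E (μs j) + μs j :=
      le_trans h1 (hmono _ _ _ _ hEij (hμmono hij))
    exact absurd h3 (not_le.2 (hEB (μs j) (hμB j)).2.2.2)
  choose μf hμfB hμfKey using key
  -- take the max over ℓ ∈ S (together with b₀)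
  have hne : (insert b₀ (S.image μf)).Nonempty := ⟨b₀, Finset.mem_insert_self _ _⟩
  set mus := (insert b₀ (S.image μf)).max' hne with hmus
  have hmusB : InB mus := by
    have := (insert b₀ (S.image μf)).max'_mem hne
    rw [← hmus] at this
    rcases Finset.mem_insert.1 this with h | h
    · rw [h]; exact hb₀B
    · obtain ⟨ℓ, _, hℓ⟩ := Finset.mem_image.1 h
      rw [← hℓ]; exact hμfB ℓ
  refine ⟨mus, hmusB.1, hmusB.2, ?_⟩
  intro ℓ hℓ e ⟨l, _, hlS, hlsum⟩
  by_cases hb : ∃ b, InB b ∧ ℓ ≤ e + b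
  · left
    have hmem : ∃ m : Multiset M, (∀ x ∈ m, x ∈ S) ∧ m.sum = e :=
      ⟨(l : Multiset M), by simpa using hlS, by simpa using hlsum⟩
    have h1 := hμfKey ℓ e hmem hb
    have h2 : μf ℓ ≤ mus :=
      Finset.le_max' _ _ (Finset.mem_insert_of_mem (Finset.mem_image_of_mem _ hℓ))
    exact le_trans h1 (hmono _ _ _ _ le_rfl h2)
  · right
    intro b hb0 hbrel
    by_contra h
    exact hb ⟨b, ⟨hb0, hbrel⟩, not_lt.1 h⟩
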